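/- Let Γ be a finite weak generalized hexagon of order (s,t) and let S be a set of lines of Γ that are mutually opposite (any two distinct lines of S are at distance 6 in the incidence graph). Then |S| ≤ s·t^2 + 1. -/

import Mathlib

/-- The incidence graph of a point-line geometry. -/
def IncidenceGraph {P L : Type*} (I : P → L → Prop) : SimpleGraph (P ⊕ L) where
  Adj x y :=
    (∃ p l, x = Sum.inl p ∧ y = Sum.inr l ∧ I p l) ∨
    (∃ p l, x = Sum.inr l ∧ y = Sum.inl p ∧ I p l)
  symm := by
    constructor
    rintro x y (⟨p, l, hx, hy, h⟩ | ⟨p, l, hx, hy, h⟩)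
    · exact Or.inr ⟨p, l, hy, hx, h⟩
    · exact Or.inl ⟨p, l, hy, hx, h⟩
  loopless := by
    constructor
    rintro x (⟨p, l, hx, hy, h⟩ | ⟨p, l, hx, hy, h⟩) <;> subst hx <;> simp_all

/-- A finite weak generalized hexagon: the incidence graph is connected, has girth
exactly 12, and has all pairwise distances at most 6. -/
def IsWeakGenHexagon {P L : Type*} (I : P → L → Prop) : Prop :=
  (IncidenceGraph I).Connected ∧ (IncidenceGraph I).girth = 12 ∧
    ∀ x y, (IncidenceGraph I).dist x y ≤ 6

/-- The geometry has order (s,t): every line is incident with exactly s+1 points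
and every point with exactly t+1 lines. -/
def HasOrder {P L : Type*} (I : P → L → Prop) (s t : ℕ) : Prop :=
  (∀ l, {p | I p l}.ncard = s + 1) ∧ (∀ p, {l | I p l}.ncard = t + 1)

section Aux

variable {P L : Type} (I : P → L → Prop)

lemma IncidenceGraph.adj_inl {p : P} {v : P ⊕ L}
    (h : (IncidenceGraph I).Adj (Sum.inl p) v) : ∃ a, v = Sum.inr a ∧ I p a := by
  rcases h with ⟨p', a, hx, hy, hI⟩ | ⟨p', a, hx, hy, hI⟩
  · exact ⟨a, hy, by cases hx; exact hI⟩
  · simp at hx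

lemma IncidenceGraph.adj_inr {a : L} {v : P ⊕ L}
    (h : (IncidenceGraph I).Adj (Sum.inr a) v) : ∃ x, v = Sum.inl x ∧ I x a := by
  rcases h with ⟨p', a', hx, hy, hI⟩ | ⟨p', a', hx, hy, hI⟩
  · simp at hx
  · exact ⟨p', hy, by cases hx; exact hI⟩

lemma IncidenceGraph.adj_of_inc {p : P} {a : L} (h : I p a) :
    (IncidenceGraph I).Adj (Sum.inl p) (Sum.inr a) :=
  Or.inl ⟨p, a, rfl, rfl, h⟩

/-- The incidence graph is bipartite: parity of walk lengths. -/
lemma IncidenceGraph.walk_parity : ∀ {x y : P ⊕ L} (w : (IncidenceGraph I).Walk x y),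
    (Even w.length ↔ (x.isLeft = y.isLeft)) := by
  intro x y w
  induction w with
  | nil => simp
  | @cons u v z h w ih =>
    have huv : u.isLeft = !v.isLeft := by
      rcases h with ⟨p', a', hx, hy, _⟩ | ⟨p', a', hx, hy, _⟩ <;> subst hx <;> subst hy <;> rfl
    rw [SimpleGraph.Walk.length_cons, Nat.even_add_one, ih, huv]
    cases hv : v.isLeft <;> cases hz : z.isLeft <;> simp

/-- Fiberwise counting bound for a set of pairs. -/
lemma ncard_prod_le {α β : Type} [Fintype α] [Fintype β] (T : Set (α × β)) (A : Set α)
    (n : ℕ) (hA : ∀ q ∈ T, q.1 ∈ A) (hn : ∀ a, {b | (a, b) ∈ T}.ncard ≤ n) :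
    T.ncard ≤ A.ncard * n := by
  classical
  rw [Set.ncard_eq_toFinset_card' T, Set.ncard_eq_toFinset_card' A]
  rw [mul_comm]
  apply Finset.card_le_mul_card_image_of_maps_to (f := Prod.fst)
    (t := A.toFinset) (fun q hq => by
      rw [Set.mem_toFinset] at hq ⊢; exact hA q hq)
  intro a _
  have hinj : ∀ q ∈ ({q ∈ T.toFinset | q.1 = a} : Finset (α × β)),
      q.2 ∈ ({b | (a, b) ∈ T} : Set β).toFinset := by
    intro q hq
    rw [Finset.mem_filter, Set.mem_toFinset] at hq
    rw [Set.mem_toFinset]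
    obtain ⟨hqT, hq1⟩ := hq
    simpa [← hq1] using hqT
  calc ({q ∈ T.toFinset | q.1 = a} : Finset (α × β)).card
      ≤ ({b | (a, b) ∈ T} : Set β).toFinset.card := by
        apply Finset.card_le_card_of_injOn Prod.snd hinj
        intro q hq q' hq' h2
        rw [Finset.coe_filter, Set.mem_setOf_eq] at hq hq'
        exact Prod.ext (hq.2.trans hq'.2.symm) h2
    _ ≤ n := by rw [← Set.ncard_eq_toFinset_card']; exact hn a

end Aux

/-- In a finite weak generalized hexagon of order (s,t), a set of
mutually opposite lines (pairwise at distance 6 in the incidence graph) has at most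
s·t²+1 elements. -/
theorem mutually_opposite_lines_bound
    {P L : Type} [Fintype P] [Fintype L] (I : P → L → Prop) (s t : ℕ)
    (hs : 1 ≤ s) (ht : 1 ≤ t)
    (hΓ : IsWeakGenHexagon I) (hord : HasOrder I s t)
    (S : Set L)
    (hopp : ∀ l ∈ S, ∀ m ∈ S, l ≠ m →
      (IncidenceGraph I).dist (Sum.inr l) (Sum.inr m) = 6) :
    S.ncard ≤ s * t ^ 2 + 1 := by
  classical
  obtain ⟨hconn, hgirth, hd6⟩ := hΓ
  obtain ⟨hord1, hord2⟩ := hord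
  rcases S.eq_empty_or_nonempty with hS | ⟨l, hl⟩
  · simp [hS]
  obtain ⟨p, hp⟩ : {p | I p l}.Nonempty := by
    apply Set.nonempty_of_ncard_ne_zero; rw [hord1 l]; omega
  set G := IncidenceGraph I with hG
  have hpl1 : G.dist (Sum.inl p) (Sum.inr l) = 1 :=
    SimpleGraph.dist_eq_one_iff_adj.mpr (IncidenceGraph.adj_of_inc I hp)
  -- the target set of triples
  set T : Set (L × P × L) := {q | I p q.1 ∧ q.1 ≠ l ∧ I q.2.1 q.1 ∧ q.2.1 ≠ p ∧
    I q.2.1 q.2.2 ∧ q.2.2 ≠ q.1} with hT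
  -- key construction
  have hkey : ∀ m, m ∈ S → m ≠ l → ∃ q : L × P × L,
      q ∈ T ∧ G.dist (Sum.inr q.2.2) (Sum.inr m) ≤ 2 := by
    intro m hm hne
    have h6 : G.dist (Sum.inr l) (Sum.inr m) = 6 :=
      hopp l hl m hm (fun h => hne h.symm)
    have h5 : G.dist (Sum.inl p) (Sum.inr m) = 5 := by
      have htri := hconn.dist_triangle (u := Sum.inr l) (v := Sum.inl p) (w := Sum.inr m)
      have hc : G.dist (Sum.inr l) (Sum.inl p) = 1 := by rwa [SimpleGraph.dist_comm] at hpl1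
      have hle := hd6 (Sum.inl p) (Sum.inr m)
      have hodd : ¬ Even (G.dist (Sum.inl p) (Sum.inr m)) := by
        obtain ⟨w, hw⟩ := hconn.exists_walk_length_eq_dist (Sum.inl p) (Sum.inr m)
        rw [← hw, IncidenceGraph.walk_parity I w]; simp
      have h56 : G.dist (Sum.inl p) (Sum.inr m) = 5 ∨
          G.dist (Sum.inl p) (Sum.inr m) = 6 := by omega
      rcases h56 with h | h
      · exact h
      · exact absurd (by rw [h]; decide) hodd
    obtain ⟨w, hw⟩ := hconn.exists_walk_length_eq_dist (Sum.inl p) (Sum.inr m)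
    rw [h5] at hw
    cases w with
    | cons h1 w1 =>
      obtain ⟨a, hv1, hIa⟩ := IncidenceGraph.adj_inl I h1
      subst hv1
      cases w1 with
      | nil => simp at hw
      | cons h2 w2 =>
        obtain ⟨x, hv2, hIxa⟩ := IncidenceGraph.adj_inr I h2
        subst hv2
        cases w2 with
        | cons h3 w3 =>
          obtain ⟨b, hv3, hIxb⟩ := IncidenceGraph.adj_inl I h3
          subst hv3
          have hw3 : w3.length = 2 := by
            simp [SimpleGraph.Walk.length_cons] at hw; omega
          have hbm : G.dist (Sum.inr b) (Sum.inr m) ≤ 2 := by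
            have := SimpleGraph.dist_le w3; omega
          refine ⟨(a, x, b), ⟨hIa, ?_, hIxa, ?_, hIxb, ?_⟩, hbm⟩
          · -- a ≠ l
            show a ≠ l
            intro heq; subst heq
            have hle4 : G.dist (Sum.inr a) (Sum.inr m) ≤ 4 := by
              have := SimpleGraph.dist_le (SimpleGraph.Walk.cons h2 (SimpleGraph.Walk.cons h3 w3))
              simp [SimpleGraph.Walk.length_cons] at this ⊢; omega
            omega
          · -- x ≠ p
            show x ≠ p
            intro heq; subst heq
            have hle3 : G.dist (Sum.inl x) (Sum.inr m) ≤ 3 := by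
              have := SimpleGraph.dist_le (SimpleGraph.Walk.cons h3 w3)
              simp [SimpleGraph.Walk.length_cons] at this ⊢; omega
            omega
          · -- b ≠ a
            show b ≠ a
            intro heq; subst heq
            have hpa : G.dist (Sum.inl p) (Sum.inr b) = 1 :=
              SimpleGraph.dist_eq_one_iff_adj.mpr (IncidenceGraph.adj_of_inc I hIa)
            have htri := hconn.dist_triangle (u := Sum.inl p) (v := Sum.inr b)
              (w := Sum.inr m)
            omega
  choose g hg using hkey
  have hnL : Nonempty (L × P × L) := ⟨(l, p, l)⟩
  set F : L → L × P × L := fun m =>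
    if h : m ∈ S ∧ m ≠ l then g m h.1 h.2 else Classical.arbitrary _ with hF
  have hFspec : ∀ m ∈ S \ {l}, F m ∈ T ∧ G.dist (Sum.inr (F m).2.2) (Sum.inr m) ≤ 2 := by
    intro m hm
    obtain ⟨hmS, hml⟩ := hm
    rw [Set.mem_singleton_iff] at hml
    rw [hF]; simp only [dif_pos (⟨hmS, hml⟩ : m ∈ S ∧ m ≠ l)]
    exact hg m hmS hml
  have hinj : Set.InjOn F (S \ {l}) := by
    intro m hm m' hm' heq
    by_contra hne
    have h6 := hopp m hm.1 m' hm'.1 hne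
    have h1 := (hFspec m hm).2
    have h2 := (hFspec m' hm').2
    rw [heq] at h1
    have htri := hconn.dist_triangle (u := Sum.inr m) (v := Sum.inr (F m').2.2)
      (w := Sum.inr m')
    have hcomm : G.dist (Sum.inr m) (Sum.inr (F m').2.2) =
        G.dist (Sum.inr (F m').2.2) (Sum.inr m) := SimpleGraph.dist_comm
    omega
  have hcard1 : (S \ {l}).ncard ≤ T.ncard :=
    Set.ncard_le_ncard_of_injOn F (fun m hm => (hFspec m hm).1) hinj T.toFinite
  -- count T
  have hTcard : T.ncard ≤ t * (s * t) := by
    have hmain := ncard_prod_le T {a | I p a ∧ a ≠ l} (s * t)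
      (fun q hq => ⟨hq.1, hq.2.1⟩) ?_
    · have hA : ({a | I p a ∧ a ≠ l} : Set L).ncard = t := by
        have : ({a | I p a ∧ a ≠ l} : Set L) = {a | I p a} \ {l} := by
          ext a; simp [Set.mem_diff]
        rw [this, Set.ncard_diff_singleton_of_mem (by exact hp), hord2 p]
        omega
      rwa [hA] at hmain
    · intro a
      by_cases hIpa : I p a ∧ a ≠ l
      · have hinner := ncard_prod_le {b : P × L | (a, b) ∈ T} {x | I x a ∧ x ≠ p} t
          (fun q hq => ⟨hq.2.2.1, hq.2.2.2.1⟩) ?_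
        · have hX : ({x | I x a ∧ x ≠ p} : Set P).ncard = s := by
            have : ({x | I x a ∧ x ≠ p} : Set P) = {x | I x a} \ {p} := by
              ext x; simp [Set.mem_diff]
            rw [this, Set.ncard_diff_singleton_of_mem (by exact hIpa.1), hord1 a]
            omega
          rwa [hX] at hinner
        · intro x
          show {b : L | (a, x, b) ∈ T}.ncard ≤ t
          by_cases hIxa : I x a ∧ x ≠ p
          · have hsub : {b : L | (a, x, b) ∈ T} ⊆ {b | I x b} \ {a} := by
              intro b hb
              exact ⟨hb.2.2.2.2.1, hb.2.2.2.2.2⟩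
            calc {b : L | (a, x, b) ∈ T}.ncard
                ≤ ({b | I x b} \ {a} : Set L).ncard :=
                  Set.ncard_le_ncard hsub (Set.toFinite _)
              _ = t := by
                  rw [Set.ncard_diff_singleton_of_mem (by exact hIxa.1), hord2 x]
                  omega
          · have : {b : L | (a, x, b) ∈ T} = ∅ := by
              ext b
              simp only [Set.mem_setOf_eq, Set.mem_empty_iff_false, iff_false]
              intro hb
              exact hIxa ⟨hb.2.2.1, hb.2.2.2.1⟩
            rw [this]; simp
      · have : {b : P × L | (a, b) ∈ T} = ∅ := by
          ext b
          simp only [Set.mem_setOf_eq, Set.mem_empty_iff_false, iff_false]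
          intro hb
          exact hIpa ⟨hb.1, hb.2.1⟩
        rw [this]; simp
  have hfinal : (S \ {l}).ncard + 1 = S.ncard := Set.ncard_diff_singleton_add_one hl
  have : t * (s * t) = s * t ^ 2 := by ring
  omega
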